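/- Let h : ℝ×ℝ×ℝ → ℝ map [0,1]³ into [0,1] and satisfy: h(0,0,0) = 0; for each coordinate, h is strictly increasing in that coordinate on (0,1] whenever the other two coordinates are fixed in (0,1]; and h is twice continuously differentiable on [0,1]³. Let ε* be the potential threshold of the scalar admissible system f(x,ε) = h(ε·x, ε·x, ε·x), g(x) = x. Then for every ε ∈ [0,1] with ε < ε*, there exists m₀ ∈ ℕ such that for every coupling memory m ≥ m₀, every L ∈ ℕ, and every family (x_t)_{t∈ℤ} with x_t ∈ [0,1] for all t, x_t = 0 for all t ∉ {1,…,L}, and x_t = (1/(m+1))·Σ_{k=0}^{m} h(q_{t+k}, q_{t+k}, q_{t+k}) for all t ∈ {1,…,L}, where q_s = (ε/(m+1))·Σ_{j=0}^{m} x_{s−j}, one has x_t = 0 for all t ∈ ℤ; that is, threshold saturation holds for braided convolutional codes. -/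

import Mathlib

open Set intervalIntegral

/-- `G g x = ∫₀ˣ g(z) dz`. -/
noncomputable def Gfun (g : ℝ → ℝ) (x : ℝ) : ℝ := ∫ z in (0:ℝ)..x, g z

/-- `F f y ε = ∫₀ʸ f(z,ε) dz`. -/
noncomputable def Ffun (f : ℝ → ℝ → ℝ) (y ε : ℝ) : ℝ := ∫ z in (0:ℝ)..y, f z ε

/-- The potential function `U(x;ε) = x·g(x) − G(x) − F(g(x);ε)`. -/
noncomputable def Ufun (f : ℝ → ℝ → ℝ) (g : ℝ → ℝ) (x ε : ℝ) : ℝ :=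
  x * g x - Gfun g x - Ffun f (g x) ε

/-- The minimum unstable fixed point
`u(ε) = sup{ x̃ ∈ [0,1] : f(g(x),ε) < x for all x ∈ (0,x̃) }`. -/
noncomputable def minUnstable (f : ℝ → ℝ → ℝ) (g : ℝ → ℝ) (ε : ℝ) : ℝ :=
  sSup {xt : ℝ | xt ∈ Icc (0:ℝ) 1 ∧ ∀ x ∈ Ioo (0:ℝ) xt, f (g x) ε < x}

/-- The potential threshold
`ε* = sup{ ε ∈ [0,1] : u(ε) > 0 and U(x;ε) > 0 for all x ∈ [u(ε),1] }`. -/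
noncomputable def potentialThreshold (f : ℝ → ℝ → ℝ) (g : ℝ → ℝ) : ℝ :=
  sSup {ε : ℝ | ε ∈ Icc (0:ℝ) 1 ∧ 0 < minUnstable f g ε ∧
    ∀ x ∈ Icc (minUnstable f g ε) 1, 0 < Ufun f g x ε}

section aux
variable {φ : ℝ → ℝ}

lemma phi_intg (hmono : MonotoneOn φ (Icc 0 1)) {a b : ℝ}
    (ha : 0 ≤ a) (hab : a ≤ b) (hb : b ≤ 1) : IntervalIntegrable φ MeasureTheory.volume a b := by
  refine (hmono.mono ?_).intervalIntegrable
  rw [Set.uIcc_of_le hab]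
  exact Set.Icc_subset_Icc ha hb

lemma phi_diff (hmono : MonotoneOn φ (Icc 0 1)) {a b : ℝ}
    (ha : 0 ≤ a) (hab : a ≤ b) (hb : b ≤ 1) :
    (∫ z in (0:ℝ)..b, φ z) - ∫ z in (0:ℝ)..a, φ z = ∫ z in a..b, φ z := by
  rw [← integral_add_adjacent_intervals (phi_intg hmono le_rfl ha (hab.trans hb))
    (phi_intg hmono ha hab hb)]
  ring

lemma phi_lb (hmono : MonotoneOn φ (Icc 0 1)) {a b : ℝ}
    (ha : 0 ≤ a) (hab : a ≤ b) (hb : b ≤ 1) :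
    φ a * (b - a) ≤ ∫ z in a..b, φ z := by
  have := intervalIntegral.integral_mono_on (μ := MeasureTheory.volume)
    (f := fun _ => φ a) (g := φ) hab (intervalIntegrable_const)
    (phi_intg hmono ha hab hb)
    (fun z hz => hmono ⟨ha, hab.trans hb⟩ ⟨le_trans ha hz.1, hz.2.trans hb⟩ hz.1)
  simpa [mul_comm] using this
lemma phi_ub (hmono : MonotoneOn φ (Icc 0 1)) {a b : ℝ}
    (ha : 0 ≤ a) (hab : a ≤ b) (hb : b ≤ 1) :
    (∫ z in a..b, φ z) ≤ φ b * (b - a) := by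
  have := intervalIntegral.integral_mono_on (μ := MeasureTheory.volume)
    (f := φ) (g := fun _ => φ b) hab (phi_intg hmono ha hab hb)
    (intervalIntegrable_const)
    (fun z hz => hmono ⟨le_trans ha hz.1, hz.2.trans hb⟩ ⟨ha.trans hab, hb⟩ hz.2)
  simpa [mul_comm] using this

lemma phi_cont (hmono : MonotoneOn φ (Icc 0 1))
    (hrange : ∀ z ∈ Icc (0:ℝ) 1, φ z ∈ Icc (0:ℝ) 1) :
    ContinuousOn (fun z => ∫ t in (0:ℝ)..z, φ t) (Icc 0 1) := by
  have key : ∀ a ∈ Icc (0:ℝ) 1, ∀ b ∈ Icc (0:ℝ) 1, a ≤ b →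
      (∫ t in (0:ℝ)..b, φ t) - (∫ t in (0:ℝ)..a, φ t) ∈ Icc 0 (b - a) := by
    intro a ha b hb hab
    rw [phi_diff hmono ha.1 hab hb.2]
    constructor
    · calc (0:ℝ) = 0 * (b - a) := by ring
        _ ≤ φ a * (b-a) := by
            apply mul_le_mul_of_nonneg_right (hrange a ha).1 (by linarith)
        _ ≤ _ := phi_lb hmono ha.1 hab hb.2
    · calc (∫ z in a..b, φ z) ≤ φ b * (b - a) := phi_ub hmono ha.1 hab hb.2
        _ ≤ 1 * (b - a) := mul_le_mul_of_nonneg_right (hrange b hb).2 (by linarith)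
        _ = b - a := by ring
  have : LipschitzOnWith 1 (fun z => ∫ t in (0:ℝ)..z, φ t) (Icc 0 1) := by
    refine LipschitzOnWith.of_dist_le_mul ?_
    intro a ha b hb
    rcases le_total a b with hab | hab
    · have := key a ha b hb hab
      rw [Real.dist_eq, Real.dist_eq]
      rw [abs_of_nonpos (by linarith [this.1]), abs_of_nonpos (by linarith)]
      simp only [NNReal.coe_one, one_mul]
      linarith [this.2]
    · have := key b hb a ha hab
      rw [Real.dist_eq, Real.dist_eq]
      rw [abs_of_nonneg (by linarith [this.1]), abs_of_nonneg (by linarith)]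
      simp only [NNReal.coe_one, one_mul]
      linarith [this.2]
  exact this.continuousOn

end aux

lemma ft_strict {h : ℝ → ℝ → ℝ → ℝ}
    (h_maps : ∀ a ∈ Icc (0:ℝ) 1, ∀ b ∈ Icc (0:ℝ) 1, ∀ c ∈ Icc (0:ℝ) 1,
      h a b c ∈ Icc (0:ℝ) 1)
    (h_zero : h 0 0 0 = 0)
    (h_mono1 : ∀ b ∈ Ioc (0:ℝ) 1, ∀ c ∈ Ioc (0:ℝ) 1,
      StrictMonoOn (fun a => h a b c) (Ioc (0:ℝ) 1))
    (h_mono2 : ∀ a ∈ Ioc (0:ℝ) 1, ∀ c ∈ Ioc (0:ℝ) 1,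
      StrictMonoOn (fun b => h a b c) (Ioc (0:ℝ) 1))
    (h_mono3 : ∀ a ∈ Ioc (0:ℝ) 1, ∀ b ∈ Ioc (0:ℝ) 1,
      StrictMonoOn (fun c => h a b c) (Ioc (0:ℝ) 1))
    {a b : ℝ} (ha : 0 ≤ a) (hab : a < b) (hb : b ≤ 1) :
    h a a a < h b b b := by
  have key : ∀ p q : ℝ, 0 < p → p < q → q ≤ 1 → h p p p < h q q q := by
    intro p q hp hpq hq
    have hpm : p ∈ Ioc (0:ℝ) 1 := ⟨hp, (hpq.le.trans hq)⟩
    have hqm : q ∈ Ioc (0:ℝ) 1 := ⟨hp.trans hpq, hq⟩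
    calc h p p p < h q p p := h_mono1 p hpm p hpm hpm hqm hpq
      _ < h q q p := h_mono2 q hqm p hpm hpm hqm hpq
      _ < h q q q := h_mono3 q hqm q hqm hpm hqm hpq
  rcases eq_or_lt_of_le ha with rfl | hapos
  · have h1 : h (b/2) (b/2) (b/2) < h b b b := key (b/2) b (by linarith) (by linarith) hb
    have hm : (b/2) ∈ Icc (0:ℝ) 1 := ⟨by linarith, by linarith⟩
    have h0 : (0:ℝ) ≤ h (b/2) (b/2) (b/2) := (h_maps _ hm _ hm _ hm).1
    rw [h_zero]; linarith
  · exact key a b hapos hab hb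

lemma ft_mono {h : ℝ → ℝ → ℝ → ℝ}
    (h_maps : ∀ a ∈ Icc (0:ℝ) 1, ∀ b ∈ Icc (0:ℝ) 1, ∀ c ∈ Icc (0:ℝ) 1,
      h a b c ∈ Icc (0:ℝ) 1)
    (h_zero : h 0 0 0 = 0)
    (h_mono1 : ∀ b ∈ Ioc (0:ℝ) 1, ∀ c ∈ Ioc (0:ℝ) 1,
      StrictMonoOn (fun a => h a b c) (Ioc (0:ℝ) 1))
    (h_mono2 : ∀ a ∈ Ioc (0:ℝ) 1, ∀ c ∈ Ioc (0:ℝ) 1,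
      StrictMonoOn (fun b => h a b c) (Ioc (0:ℝ) 1))
    (h_mono3 : ∀ a ∈ Ioc (0:ℝ) 1, ∀ b ∈ Ioc (0:ℝ) 1,
      StrictMonoOn (fun c => h a b c) (Ioc (0:ℝ) 1))
    {a b : ℝ} (ha : 0 ≤ a) (hab : a ≤ b) (hb : b ≤ 1) :
    h a a a ≤ h b b b := by
  rcases eq_or_lt_of_le hab with rfl | hlt
  · exact le_refl _
  · exact (ft_strict h_maps h_zero h_mono1 h_mono2 h_mono3 ha hlt hb).le


lemma tel_Ioc (g : ℤ → ℝ) (a b : ℤ) (hab : a ≤ b) :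
    ∑ t ∈ Finset.Ioc a b, (g t - g (t-1)) = g b - g a := by
  refine Int.le_induction (motive := fun b _ => ∑ t ∈ Finset.Ioc a b, (g t - g (t-1)) = g b - g a)
    (by simp) (fun n hn ih => ?_) b hab
  show ∑ t ∈ Finset.Ioc a (n+1), (g t - g (t-1)) = g (n+1) - g a
  have ih' : ∑ t ∈ Finset.Ioc a n, (g t - g (t-1)) = g n - g a := ih
  have hins : Finset.Ioc a (n+1) = insert (n+1) (Finset.Ioc a n) := by
    ext i; simp only [Finset.mem_Ioc, Finset.mem_insert]; omega
  rw [hins, Finset.sum_insert (by simp), ih']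
  have h2 : n + 1 - 1 = n := by ring
  rw [h2]; ring

lemma shift_Ioc_sum (F : ℤ → ℝ) (a b j : ℤ) :
    ∑ s ∈ Finset.Ioc a b, F (s - j) = ∑ t ∈ Finset.Ioc (a - j) (b - j), F t := by
  have : Finset.Ioc (a-j) (b-j) = (Finset.Ioc a b).map (addRightEmbedding (-j)) := by
    rw [Finset.map_add_right_Ioc]; congr 1 <;> ring
  rw [this, Finset.sum_map]
  simp [addRightEmbedding, sub_eq_add_neg]

set_option maxHeartbeats 2000000 in
lemma fixed_point_bound
    (ff : ℝ → ℝ) (hff0 : ff 0 = 0)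
    (hffmono : ∀ a b : ℝ, 0 ≤ a → a ≤ b → b ≤ 1 → ff a ≤ ff b)
    (hffstrict : ∀ a b : ℝ, 0 ≤ a → a < b → b ≤ 1 → ff a < ff b)
    (hffrange : ∀ q : ℝ, 0 ≤ q → q ≤ 1 → 0 ≤ ff q ∧ ff q ≤ 1)
    (ε : ℝ) (hε0 : 0 < ε) (hε1 : ε ≤ 1)
    (m : ℕ) (hm1 : 1 ≤ m) (L : ℕ) (x : ℤ → ℝ)
    (hx01 : ∀ t, x t ∈ Set.Icc (0:ℝ) 1)
    (hsupp : ∀ t : ℤ, t ∉ Set.Icc (1:ℤ) (L:ℤ) → x t = 0)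
    (hEq : ∀ t ∈ Set.Icc (1:ℤ) (L:ℤ), x t = (1/((m:ℝ)+1)) * ∑ k ∈ Finset.range (m+1),
      ff (ε/((m:ℝ)+1) * ∑ j ∈ Finset.range (m+1), x (t + (k:ℤ) - (j:ℤ))))
    (t₀ : ℤ) (ht₀ : x t₀ ≠ 0) :
    ∃ M : ℝ, 0 < M ∧ M ≤ 1 ∧ M < ff (ε*M) ∧
      M^2/2 - (∫ z in (0:ℝ)..M, ff (ε*z)) ≤ 1/((m:ℝ)+1) := by
  classical
  have hN : (0:ℝ) < (m:ℝ)+1 := by positivity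
  -- the maximum
  have ht₀pos : 0 < x t₀ := (hx01 t₀).1.lt_of_ne (Ne.symm ht₀)
  have ht₀mem : t₀ ∈ Set.Icc (1:ℤ) (L:ℤ) := by
    by_contra hn; exact ht₀ (hsupp t₀ hn)
  have ht₀F : t₀ ∈ Finset.Icc (1:ℤ) (L:ℤ) := Finset.mem_Icc.mpr ⟨ht₀mem.1, ht₀mem.2⟩
  set Mset : Finset ℝ := (Finset.Icc (1:ℤ) (L:ℤ)).image x with hMset
  have hMne : Mset.Nonempty := ⟨x t₀, Finset.mem_image_of_mem x ht₀F⟩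
  set M : ℝ := Mset.max' hMne with hMdef
  obtain ⟨s₁, hs₁F, hs₁M0⟩ := Finset.mem_image.mp (Finset.max'_mem Mset hMne)
  have hs₁M : x s₁ = M := hs₁M0
  have hMmax : ∀ s ∈ Finset.Icc (1:ℤ) (L:ℤ), x s ≤ M :=
    fun s hs => Finset.le_max' _ _ (Finset.mem_image_of_mem x hs)
  have hMpos : 0 < M := lt_of_lt_of_le ht₀pos (hMmax t₀ ht₀F)
  have hMub : ∀ s : ℤ, x s ≤ M := by
    intro s
    by_cases hs : s ∈ Set.Icc (1:ℤ) (L:ℤ)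
    · exact hMmax s (Finset.mem_Icc.mpr ⟨hs.1, hs.2⟩)
    · rw [hsupp s hs]; exact hMpos.le
  have hM1 : M ≤ 1 := by rw [← hs₁M]; exact (hx01 s₁).2
  have hεM1 : ε * M ≤ 1 := by nlinarith
  -- the last argmax T
  set Aset : Finset ℤ := (Finset.Icc (1:ℤ) (L:ℤ)).filter (fun s => x s = M) with hAset
  have hAne : Aset.Nonempty := ⟨s₁, Finset.mem_filter.mpr ⟨hs₁F, hs₁M⟩⟩
  set T : ℤ := Aset.max' hAne with hTdef
  have hTmem := Finset.mem_filter.mp (Finset.max'_mem Aset hAne)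
  have hT1L := Finset.mem_Icc.mp hTmem.1
  have hxT : x T = M := hTmem.2
  have hTset : T ∈ Set.Icc (1:ℤ) (L:ℤ) := ⟨hT1L.1, hT1L.2⟩
  have hTub : ∀ s : ℤ, T < s → x s < M := by
    intro s hs
    by_cases hsF : s ∈ Set.Icc (1:ℤ) (L:ℤ)
    · rcases lt_or_eq_of_le (hMmax s (Finset.mem_Icc.mpr ⟨hsF.1, hsF.2⟩)) with h | h
      · exact h
      · exfalso
        have : s ∈ Aset := Finset.mem_filter.mpr ⟨Finset.mem_Icc.mpr ⟨hsF.1, hsF.2⟩, h⟩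
        exact absurd (Finset.le_max' Aset s this) (by omega)
    · rw [hsupp s hsF]; exact hMpos
  -- the monotone envelope y
  set y : ℤ → ℝ := fun t => (insert (0:ℝ) ((Finset.Icc (1:ℤ) t).image x)).max'
    (Finset.insert_nonempty _ _) with hydef
  have hy0le : ∀ t, 0 ≤ y t := fun t => Finset.le_max' _ _ (Finset.mem_insert_self _ _)
  have hy_gex : ∀ t s : ℤ, 1 ≤ s → s ≤ t → x s ≤ y t := fun t s h1 h2 =>
    Finset.le_max' _ _ (Finset.mem_insert_of_mem
      (Finset.mem_image_of_mem x (Finset.mem_Icc.mpr ⟨h1, h2⟩)))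
  have hxy : ∀ t, x t ≤ y t := by
    intro t
    by_cases ht : t ∈ Set.Icc (1:ℤ) (L:ℤ)
    · exact hy_gex t t ht.1 le_rfl
    · rw [hsupp t ht]; exact hy0le t
  have hy_leM : ∀ t, y t ≤ M := by
    intro t
    apply Finset.max'_le
    intro v hv
    rcases Finset.mem_insert.mp hv with rfl | hv
    · exact hMpos.le
    · obtain ⟨s, _, rfl⟩ := Finset.mem_image.mp hv
      exact hMub s
  have hy_mono : ∀ t t' : ℤ, t ≤ t' → y t ≤ y t' := by
    intro t t' htt
    apply Finset.max'_subset
    apply Finset.insert_subset_insert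
    apply Finset.image_subset_image
    exact Finset.Icc_subset_Icc le_rfl htt
  have hy_zero : ∀ t : ℤ, t ≤ 0 → y t = 0 := by
    intro t ht
    have he : Finset.Icc (1:ℤ) t = ∅ := Finset.Icc_eq_empty (by omega)
    simp [hydef, he]
  have hyT : ∀ t : ℤ, T ≤ t → y t = M :=
    fun t ht => le_antisymm (hy_leM t) (hxT ▸ hy_gex t T hT1L.1 ht)
  have hy_cases : ∀ t : ℤ, y t = 0 ∨ ∃ s : ℤ, 1 ≤ s ∧ s ≤ t ∧ x s = y t := by
    intro t
    have hmem := Finset.max'_mem (insert (0:ℝ) ((Finset.Icc (1:ℤ) t).image x))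
      (Finset.insert_nonempty _ _)
    rcases Finset.mem_insert.mp hmem with hcase | hcase
    · left; exact hcase
    · obtain ⟨s, hs, hxs⟩ := Finset.mem_image.mp hcase
      exact Or.inr ⟨s, (Finset.mem_Icc.mp hs).1, (Finset.mem_Icc.mp hs).2, hxs⟩
  -- the smoothed envelope w
  set w : ℤ → ℝ := fun s => (1/((m:ℝ)+1)) * ∑ j ∈ Finset.range (m+1), y (s - (j:ℤ)) with hwdef
  have hw_ge0 : ∀ s, 0 ≤ w s := by
    intro s
    apply mul_nonneg (by positivity)
    exact Finset.sum_nonneg fun j _ => hy0le _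
  have hw_leM : ∀ s, w s ≤ M := by
    intro s
    have h1 : ∑ j ∈ Finset.range (m+1), y (s - (j:ℤ)) ≤ ((m:ℝ)+1) * M := by
      calc ∑ j ∈ Finset.range (m+1), y (s - (j:ℤ)) ≤ ∑ _j ∈ Finset.range (m+1), M :=
            Finset.sum_le_sum fun j _ => hy_leM _
        _ = ((m:ℝ)+1) * M := by
            rw [Finset.sum_const, Finset.card_range, nsmul_eq_mul]; push_cast; ring
    calc w s ≤ (1/((m:ℝ)+1)) * (((m:ℝ)+1) * M) := by
          exact mul_le_mul_of_nonneg_left h1 (by positivity)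
      _ = M := by field_simp
  have hw_mono : ∀ s s' : ℤ, s ≤ s' → w s ≤ w s' := by
    intro s s' hss
    apply mul_le_mul_of_nonneg_left _ (by positivity)
    exact Finset.sum_le_sum fun j _ => hy_mono _ _ (by omega)
  have hw_zero : ∀ s : ℤ, s ≤ 0 → w s = 0 := by
    intro s hs
    have : ∑ j ∈ Finset.range (m+1), y (s - (j:ℤ)) = 0 := by
      apply Finset.sum_eq_zero
      intro j _
      have hj : (0:ℤ) ≤ (j:ℤ) := Int.natCast_nonneg j
      exact hy_zero _ (by omega)
    rw [hwdef]; simp only []; rw [this]; ring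
  have hw_M : ∀ s : ℤ, T + (m:ℤ) ≤ s → w s = M := by
    intro s hs
    have hall : ∀ j ∈ Finset.range (m+1), y (s - (j:ℤ)) = M := by
      intro j hj
      have hjm : (j:ℤ) ≤ (m:ℤ) := by
        exact_mod_cast Nat.lt_succ_iff.mp (Finset.mem_range.mp hj)
      exact hyT _ (by omega)
    rw [hwdef]; simp only []
    rw [Finset.sum_congr rfl hall, Finset.sum_const, Finset.card_range, nsmul_eq_mul]
    push_cast; field_simp
  -- the coupled operator applied to y
  set Ty : ℤ → ℝ := fun t => (1/((m:ℝ)+1)) * ∑ k ∈ Finset.range (m+1),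
    ff (ε * w (t + (k:ℤ))) with hTydef
  have hεw0 : ∀ s : ℤ, 0 ≤ ε * w s := fun s => mul_nonneg hε0.le (hw_ge0 s)
  have hεw1 : ∀ s : ℤ, ε * w s ≤ 1 := fun s => by nlinarith [hw_leM s, hw_ge0 s]
  have hTy_ge0 : ∀ t, 0 ≤ Ty t := by
    intro t
    apply mul_nonneg (by positivity)
    exact Finset.sum_nonneg fun k _ => (hffrange _ (hεw0 _) (hεw1 _)).1
  have hTy_mono : ∀ t t' : ℤ, t ≤ t' → Ty t ≤ Ty t' := by
    intro t t' htt
    apply mul_le_mul_of_nonneg_left _ (by positivity)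
    refine Finset.sum_le_sum fun k _ => hffmono _ _ (hεw0 _) ?_ (hεw1 _)
    exact mul_le_mul_of_nonneg_left (hw_mono _ _ (by omega)) hε0.le
  -- the q-profile of x
  set qx : ℤ → ℝ := fun s => ε/((m:ℝ)+1) * ∑ j ∈ Finset.range (m+1), x (s - (j:ℤ)) with hqxdef
  have hqx0 : ∀ s, 0 ≤ qx s := by
    intro s
    apply mul_nonneg (by positivity)
    exact Finset.sum_nonneg fun j _ => (hx01 _).1
  have hqx_lew : ∀ s, qx s ≤ ε * w s := by
    intro s
    have h1 : ∑ j ∈ Finset.range (m+1), x (s - (j:ℤ)) ≤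
        ∑ j ∈ Finset.range (m+1), y (s - (j:ℤ)) :=
      Finset.sum_le_sum fun j _ => hxy _
    calc qx s ≤ ε/((m:ℝ)+1) * ∑ j ∈ Finset.range (m+1), y (s - (j:ℤ)) := by
          exact mul_le_mul_of_nonneg_left h1 (by positivity)
      _ = ε * w s := by rw [hwdef]; ring
  have hqx_leεM : ∀ s, qx s ≤ ε * M := fun s =>
    le_trans (hqx_lew s) (mul_le_mul_of_nonneg_left (hw_leM s) hε0.le)
  have hEq' : ∀ t ∈ Set.Icc (1:ℤ) (L:ℤ), x t = (1/((m:ℝ)+1)) * ∑ k ∈ Finset.range (m+1),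
      ff (qx (t + (k:ℤ))) := hEq
  -- strict bound at the top fixed point
  have hm1' : (1:ℤ) ≤ (m:ℤ) := by exact_mod_cast hm1
  have hqT_lt : qx (T + (m:ℤ)) < ε * M := by
    have hlt : x (T + (m:ℤ) - ((0:ℕ):ℤ)) < M := by
      have := hTub (T + (m:ℤ)) (by omega)
      simpa using this
    have hsum : ∑ j ∈ Finset.range (m+1), x (T + (m:ℤ) - (j:ℤ)) < ((m:ℝ)+1) * M := by
      calc ∑ j ∈ Finset.range (m+1), x (T + (m:ℤ) - (j:ℤ)) <
            ∑ _j ∈ Finset.range (m+1), M :=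
            Finset.sum_lt_sum (fun j _ => hMub _)
              ⟨0, Finset.mem_range.mpr (Nat.succ_pos m), hlt⟩
        _ = ((m:ℝ)+1) * M := by
            rw [Finset.sum_const, Finset.card_range, nsmul_eq_mul]; push_cast; ring
    calc qx (T + (m:ℤ)) < ε/((m:ℝ)+1) * (((m:ℝ)+1) * M) := by
          exact mul_lt_mul_of_pos_left hsum (by positivity)
      _ = ε * M := by field_simp
  have hC2 : M < ff (ε * M) := by
    have h1 : x T = (1/((m:ℝ)+1)) * ∑ k ∈ Finset.range (m+1), ff (qx (T + (k:ℤ))) :=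
      hEq' T hTset
    have h2 : ∑ k ∈ Finset.range (m+1), ff (qx (T + (k:ℤ))) <
        ∑ _k ∈ Finset.range (m+1), ff (ε * M) := by
      refine Finset.sum_lt_sum (fun k _ => hffmono _ _ (hqx0 _) (hqx_leεM _) hεM1) ?_
      exact ⟨m, Finset.self_mem_range_succ m, hffstrict _ _ (hqx0 _) hqT_lt hεM1⟩
    have h3 : (∑ _k ∈ Finset.range (m+1), ff (ε * M)) = ((m:ℝ)+1) * ff (ε*M) := by
      rw [Finset.sum_const, Finset.card_range, nsmul_eq_mul]; push_cast; ring
    calc M = x T := hxT.symm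
      _ < (1/((m:ℝ)+1)) * (((m:ℝ)+1) * ff (ε*M)) := by
          rw [h1]; rw [← h3]
          exact mul_lt_mul_of_pos_left h2 (by positivity)
      _ = ff (ε*M) := by field_simp
  -- C1 : y is a sub-fixed-point of the coupled operator
  have hC1 : ∀ t : ℤ, y t ≤ Ty t := by
    intro t
    rcases hy_cases t with h0 | ⟨s, hs1, hst, hxs⟩
    · rw [h0]; exact hTy_ge0 t
    · by_cases hsL : s ∈ Set.Icc (1:ℤ) (L:ℤ)
      · have hstep : x s ≤ Ty s := by
          rw [hEq' s hsL]
          apply mul_le_mul_of_nonneg_left _ (by positivity)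
          exact Finset.sum_le_sum fun k _ =>
            hffmono _ _ (hqx0 _) (hqx_lew _) (hεw1 _)
        calc y t = x s := hxs.symm
          _ ≤ Ty s := hstep
          _ ≤ Ty t := hTy_mono s t hst
      · rw [← hxs, hsupp s hsL]; exact hTy_ge0 t
  -- the potential computation
  set R : ℤ := T + (m:ℤ) with hRdef
  have hT1 : (1:ℤ) ≤ T := hT1L.1
  set φ : ℝ → ℝ := fun z => ff (ε * z) with hφdef
  have hφmono : MonotoneOn φ (Icc 0 1) := by
    intro a ha b hb hab
    exact hffmono _ _ (mul_nonneg hε0.le ha.1)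
      (mul_le_mul_of_nonneg_left hab hε0.le) (by nlinarith [hb.2])
  set Φ : ℝ → ℝ := fun z => ∫ u in (0:ℝ)..z, φ u with hΦdef
  have hΦ0 : Φ 0 = 0 := intervalIntegral.integral_same
  have htel1 : ∑ t ∈ Finset.Ioc (0:ℤ) T, ((y t)^2/2 - (y (t-1))^2/2) = M^2/2 := by
    have htl := tel_Ioc (fun t => (y t)^2/2) 0 T (by omega)
    rw [htl, hy_zero 0 le_rfl, hyT T le_rfl]
    ring
  have htel2 : ∑ s ∈ Finset.Ioc (0:ℤ) R, (Φ (w s) - Φ (w (s-1))) = Φ M := by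
    have htl := tel_Ioc (fun s => Φ (w s)) 0 R (by omega)
    rw [htl, hw_zero 0 le_rfl, hw_M R (by omega), hΦ0]
    ring
  have htel3 : ∑ s ∈ Finset.Ioc (0:ℤ) R, (ff (ε * w s) - ff (ε * w (s-1))) = ff (ε*M) := by
    have htl := tel_Ioc (fun s => ff (ε * w s)) 0 R (by omega)
    rw [htl, hw_zero 0 le_rfl, hw_M R (by omega), mul_zero, hff0]
    ring
  have hwstep : ∀ s : ℤ, w s - w (s-1) = (1/((m:ℝ)+1)) *
      ∑ j ∈ Finset.range (m+1), (y (s - (j:ℤ)) - y (s - (j:ℤ) - 1)) := by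
    intro s
    have e3 : ∀ j ∈ Finset.range (m+1), y (s - 1 - (j:ℤ)) = y (s - (j:ℤ) - 1) :=
      fun j _ => by congr 1; ring
    show (1/((m:ℝ)+1)) * ∑ j ∈ Finset.range (m+1), y (s - (j:ℤ)) -
        (1/((m:ℝ)+1)) * ∑ j ∈ Finset.range (m+1), y (s - 1 - (j:ℤ)) = _
    rw [Finset.sum_congr rfl e3, Finset.sum_sub_distrib]
    ring
  have hwstep_ge0 : ∀ s : ℤ, 0 ≤ w s - w (s-1) := fun s => by
    linarith [hw_mono (s-1) s (by omega)]
  have hwstep_le : ∀ s : ℤ, w s - w (s-1) ≤ M * (1/((m:ℝ)+1)) := by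
    intro s
    rw [hwstep s]
    have hts : ∑ j ∈ Finset.range (m+1), (y (s - (j:ℤ)) - y (s - (j:ℤ) - 1)) =
        y s - y (s - ((m:ℤ)+1)) := by
      have hsr := Finset.sum_range_sub' (f := fun j : ℕ => y (s - (j:ℤ))) (n := m+1)
      calc ∑ j ∈ Finset.range (m+1), (y (s - (j:ℤ)) - y (s - (j:ℤ) - 1))
          = ∑ j ∈ Finset.range (m+1), (y (s - (j:ℤ)) - y (s - ((j+1:ℕ):ℤ))) := by
            apply Finset.sum_congr rfl
            intro j _
            congr 2
            push_cast
            ring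
        _ = y (s - ((0:ℕ):ℤ)) - y (s - ((m+1:ℕ):ℤ)) := hsr
        _ = y s - y (s - ((m:ℤ)+1)) := by
            push_cast
            simp
    rw [hts]
    have h1 := hy_leM s
    have h2 := hy0le (s - ((m:ℤ)+1))
    have h3 : y s - y (s - ((m:ℤ)+1)) ≤ M := by linarith
    calc (1/((m:ℝ)+1)) * (y s - y (s - ((m:ℤ)+1))) ≤ (1/((m:ℝ)+1)) * M :=
          mul_le_mul_of_nonneg_left h3 (by positivity)
      _ = M * (1/((m:ℝ)+1)) := by ring
  have hstepΦ : ∀ s : ℤ, ff (ε * w s) * (w s - w (s-1)) -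
      (ff (ε * w s) - ff (ε * w (s-1))) * (M * (1/((m:ℝ)+1))) ≤ Φ (w s) - Φ (w (s-1)) := by
    intro s
    have hab : w (s-1) ≤ w s := hw_mono _ _ (by omega)
    have h0a : 0 ≤ w (s-1) := hw_ge0 _
    have hb1 : w s ≤ 1 := le_trans (hw_leM s) hM1
    have hdiff : Φ (w s) - Φ (w (s-1)) = ∫ z in (w (s-1))..(w s), φ z :=
      phi_diff hφmono h0a hab hb1
    have hlb : φ (w (s-1)) * (w s - w (s-1)) ≤ ∫ z in (w (s-1))..(w s), φ z :=
      phi_lb hφmono h0a hab hb1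
    have hφs : φ (w (s-1)) = ff (ε * w (s-1)) := rfl
    rw [hφs] at hlb
    have hffd : 0 ≤ ff (ε * w s) - ff (ε * w (s-1)) := by
      have := hffmono _ _ (hεw0 (s-1)) (mul_le_mul_of_nonneg_left hab hε0.le) (hεw1 s)
      linarith
    have hkey : (ff (ε * w s) - ff (ε * w (s-1))) * (w s - w (s-1)) ≤
        (ff (ε * w s) - ff (ε * w (s-1))) * (M * (1/((m:ℝ)+1))) :=
      mul_le_mul_of_nonneg_left (hwstep_le s) hffd
    have hring : ff (ε * w (s-1)) * (w s - w (s-1)) =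
        ff (ε * w s) * (w s - w (s-1)) -
        (ff (ε * w s) - ff (ε * w (s-1))) * (w s - w (s-1)) := by ring
    rw [hdiff]
    linarith
  have hSum2 : (∑ s ∈ Finset.Ioc (0:ℤ) R, (Φ (w s) - Φ (w (s-1)))) ≥
      (∑ s ∈ Finset.Ioc (0:ℤ) R, ff (ε * w s) * (w s - w (s-1))) -
        M * (1/((m:ℝ)+1)) * ff (ε * M) := by
    have h2 := Finset.sum_le_sum (fun s (_ : s ∈ Finset.Ioc (0:ℤ) R) => hstepΦ s)
    rw [Finset.sum_sub_distrib, ← Finset.sum_mul, htel3] at h2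
    have hco : ff (ε*M) * (M * (1/((m:ℝ)+1))) = M * (1/((m:ℝ)+1)) * ff (ε*M) := by ring
    linarith
  -- the index swap
  have hswap : (∑ s ∈ Finset.Ioc (0:ℤ) R, ff (ε * w s) * (w s - w (s-1))) =
      ∑ t ∈ Finset.Ioc (0:ℤ) T, (y t - y (t-1)) * Ty t := by
    have step1 : ∀ s : ℤ, ff (ε * w s) * (w s - w (s-1)) = (1/((m:ℝ)+1)) *
        ∑ j ∈ Finset.range (m+1), ff (ε * w s) * (y (s - (j:ℤ)) - y (s - (j:ℤ) - 1)) := by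
      intro s
      rw [Finset.mul_sum]
      rw [hwstep s, Finset.mul_sum, Finset.mul_sum]
      apply Finset.sum_congr rfl
      intro j _
      ring
    calc (∑ s ∈ Finset.Ioc (0:ℤ) R, ff (ε * w s) * (w s - w (s-1)))
        = ∑ s ∈ Finset.Ioc (0:ℤ) R, (1/((m:ℝ)+1)) *
            ∑ j ∈ Finset.range (m+1), ff (ε * w s) * (y (s - (j:ℤ)) - y (s - (j:ℤ) - 1)) :=
          Finset.sum_congr rfl (fun s _ => step1 s)
      _ = (1/((m:ℝ)+1)) * ∑ s ∈ Finset.Ioc (0:ℤ) R,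
            ∑ j ∈ Finset.range (m+1), ff (ε * w s) * (y (s - (j:ℤ)) - y (s - (j:ℤ) - 1)) := by
          rw [Finset.mul_sum]
      _ = (1/((m:ℝ)+1)) * ∑ j ∈ Finset.range (m+1), ∑ s ∈ Finset.Ioc (0:ℤ) R,
            ff (ε * w s) * (y (s - (j:ℤ)) - y (s - (j:ℤ) - 1)) := by
          rw [Finset.sum_comm]
      _ = (1/((m:ℝ)+1)) * ∑ j ∈ Finset.range (m+1), ∑ t ∈ Finset.Ioc (0:ℤ) T,
            ff (ε * w (t + (j:ℤ))) * (y t - y (t-1)) := by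
          congr 1
          apply Finset.sum_congr rfl
          intro j hj
          have hjm : (j:ℤ) ≤ (m:ℤ) := by
            exact_mod_cast Nat.lt_succ_iff.mp (Finset.mem_range.mp hj)
          have hj0 : (0:ℤ) ≤ (j:ℤ) := Int.natCast_nonneg j
          have hsh := shift_Ioc_sum
            (fun t => ff (ε * w (t + (j:ℤ))) * (y t - y (t-1))) 0 R (j:ℤ)
          have hl : ∑ s ∈ Finset.Ioc (0:ℤ) R,
              ff (ε * w s) * (y (s - (j:ℤ)) - y (s - (j:ℤ) - 1)) =
              ∑ s ∈ Finset.Ioc (0:ℤ) R,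
              (fun t => ff (ε * w (t + (j:ℤ))) * (y t - y (t-1))) (s - (j:ℤ)) := by
            apply Finset.sum_congr rfl
            intro s _
            simp only [sub_add_cancel]
          rw [hl, hsh]
          symm
          apply Finset.sum_subset
          · intro t ht
            rw [Finset.mem_Ioc] at ht ⊢
            omega
          · intro t ht hnt
            rw [Finset.mem_Ioc] at ht hnt
            have hcases : t ≤ 0 ∨ T < t := by omega
            have hz : y t - y (t-1) = 0 := by
              rcases hcases with hle | hgt
              · rw [hy_zero t hle, hy_zero (t-1) (by omega)]; ring
              · rw [hyT t (by omega), hyT (t-1) (by omega)]; ring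
            simp [hz]
      _ = ∑ t ∈ Finset.Ioc (0:ℤ) T, (y t - y (t-1)) * Ty t := by
          rw [Finset.sum_comm, Finset.mul_sum]
          apply Finset.sum_congr rfl
          intro t _
          rw [← Finset.sum_mul]
          show (1/((m:ℝ)+1)) * ((∑ i ∈ Finset.range (m+1), ff (ε * w (t + (i:ℤ)))) *
              (y t - y (t-1))) = (y t - y (t-1)) *
              ((1/((m:ℝ)+1)) * ∑ k ∈ Finset.range (m+1), ff (ε * w (t + (k:ℤ))))
          ring
  have hSum1 : (∑ t ∈ Finset.Ioc (0:ℤ) T, ((y t)^2/2 - (y (t-1))^2/2)) ≤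
      ∑ t ∈ Finset.Ioc (0:ℤ) T, (y t - y (t-1)) * Ty t := by
    apply Finset.sum_le_sum
    intro t _
    have h1 : y (t-1) ≤ y t := hy_mono _ _ (by omega)
    have h2 : y t ≤ Ty t := hC1 t
    have h3 : 0 ≤ y (t-1) := hy0le _
    have e1 : (y t - y (t-1)) * y t ≤ (y t - y (t-1)) * Ty t :=
      mul_le_mul_of_nonneg_left h2 (by linarith)
    nlinarith [sq_nonneg (y t - y (t-1))]
  have hfinal : Φ M - M^2/2 ≥ -(M * (1/((m:ℝ)+1)) * ff (ε*M)) := by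
    have hs2 := hSum2
    rw [hswap] at hs2
    have := hSum1
    rw [← htel1, ← htel2]
    linarith
  refine ⟨M, hMpos, hM1, hC2, ?_⟩
  have hffεM1 : ff (ε*M) ≤ 1 := (hffrange _ (by positivity) hεM1).2
  have hffεM0 : 0 ≤ ff (ε*M) := (hffrange _ (by positivity) hεM1).1
  have hbd : M * (1/((m:ℝ)+1)) * ff (ε*M) ≤ 1/((m:ℝ)+1) := by
    have h1 : M * (1/((m:ℝ)+1)) * ff (ε*M) ≤ M * (1/((m:ℝ)+1)) :=
      mul_le_of_le_one_right (by positivity) hffεM1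
    have h2 : M * (1/((m:ℝ)+1)) ≤ 1 * (1/((m:ℝ)+1)) :=
      mul_le_mul_of_nonneg_right hM1 (by positivity)
    linarith
  have hΦM : Φ M = ∫ z in (0:ℝ)..M, ff (ε*z) := rfl
  rw [← hΦM]
  linarith


set_option maxHeartbeats 1000000 in
/-- threshold saturation for braided convolutional codes.
Here `h` is the average BCJR transfer function over the three edge types,
the underlying scalar admissible system is `f(x,ε) = h(ε·x,ε·x,ε·x)`,
`g(x) = x`, `ε*` is its potential threshold, and
`q_s = (ε/(m+1))·Σ_{j=0}^{m} x_{s−j}`. -/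
theorem threshold_saturation_BCC
    (h : ℝ → ℝ → ℝ → ℝ)
    (h_maps : ∀ a ∈ Icc (0:ℝ) 1, ∀ b ∈ Icc (0:ℝ) 1, ∀ c ∈ Icc (0:ℝ) 1,
      h a b c ∈ Icc (0:ℝ) 1)
    (h_zero : h 0 0 0 = 0)
    (h_mono1 : ∀ b ∈ Ioc (0:ℝ) 1, ∀ c ∈ Ioc (0:ℝ) 1,
      StrictMonoOn (fun a => h a b c) (Ioc (0:ℝ) 1))
    (h_mono2 : ∀ a ∈ Ioc (0:ℝ) 1, ∀ c ∈ Ioc (0:ℝ) 1,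
      StrictMonoOn (fun b => h a b c) (Ioc (0:ℝ) 1))
    (h_mono3 : ∀ a ∈ Ioc (0:ℝ) 1, ∀ b ∈ Ioc (0:ℝ) 1,
      StrictMonoOn (fun c => h a b c) (Ioc (0:ℝ) 1))
    (h_smooth : ContDiffOn ℝ 2 (fun p : ℝ × ℝ × ℝ => h p.1 p.2.1 p.2.2)
      (Icc (0:ℝ) 1 ×ˢ Icc (0:ℝ) 1 ×ˢ Icc (0:ℝ) 1)) :
    ∀ ε ∈ Icc (0:ℝ) 1,
      ε < potentialThreshold (fun x ε' => h (ε' * x) (ε' * x) (ε' * x))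
            (fun x => x) →
      ∃ m₀ : ℕ, ∀ m : ℕ, m₀ ≤ m → ∀ L : ℕ, ∀ x : ℤ → ℝ,
        (∀ t : ℤ, x t ∈ Icc (0:ℝ) 1) →
        (∀ t : ℤ, t ∉ Icc (1:ℤ) (L:ℤ) → x t = 0) →
        (∀ q : ℤ → ℝ,
          (∀ s : ℤ, q s = (ε / (m + 1 : ℝ)) * ∑ j ∈ Finset.range (m + 1),
            x (s - (j : ℤ))) →
          ∀ t ∈ Icc (1:ℤ) (L:ℤ),
            x t = (1 / (m + 1 : ℝ)) * ∑ k ∈ Finset.range (m + 1),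
              h (q (t + (k : ℤ))) (q (t + (k : ℤ))) (q (t + (k : ℤ)))) →
        ∀ t : ℤ, x t = 0 := by
  intro ε hε hlt
  classical
  set f : ℝ → ℝ → ℝ := fun x ε' => h (ε' * x) (ε' * x) (ε' * x) with hfdef
  set S : Set ℝ := {ε0 : ℝ | ε0 ∈ Icc (0:ℝ) 1 ∧ 0 < minUnstable f (fun x => x) ε0 ∧
    ∀ z ∈ Icc (minUnstable f (fun x => x) ε0) 1, 0 < Ufun f (fun x => x) z ε0} with hSdef
  have hPT : potentialThreshold f (fun x => x) = sSup S := rfl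
  rw [hPT] at hlt
  have hSne : S.Nonempty := by
    by_contra hne
    rw [Set.not_nonempty_iff_eq_empty] at hne
    rw [hne, Real.sSup_empty] at hlt
    linarith [hε.1]
  obtain ⟨ε', hε'S, hεlt⟩ := exists_lt_of_lt_csSup hSne hlt
  obtain ⟨hε'I, hu'pos, hU'pos⟩ := hε'S
  have hε'pos : 0 < ε' := lt_of_le_of_lt hε.1 hεlt
  have hε'1 : ε' ≤ 1 := hε'I.2
  set u' : ℝ := minUnstable f (fun x => x) ε' with hu'def
  have hu'eq : u' = sSup {xt : ℝ | xt ∈ Icc (0:ℝ) 1 ∧ ∀ z ∈ Ioo (0:ℝ) xt, f z ε' < z} := rfl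
  have h0mem : (0:ℝ) ∈ {xt : ℝ | xt ∈ Icc (0:ℝ) 1 ∧ ∀ z ∈ Ioo (0:ℝ) xt, f z ε' < z} :=
    ⟨⟨le_rfl, zero_le_one⟩, fun z hz => absurd (hz.1.trans hz.2) (lt_irrefl 0)⟩
  have hu'le1 : u' ≤ 1 := by
    rw [hu'eq]
    exact csSup_le ⟨0, h0mem⟩ (fun z hz => hz.1.2)
  have hC3 : ∀ z : ℝ, 0 < z → z < u' → h (ε' * z) (ε' * z) (ε' * z) < z := by
    intro z hz0 hzu
    rw [hu'eq] at hzu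
    obtain ⟨xt, hxt, hzxt⟩ := exists_lt_of_lt_csSup ⟨0, h0mem⟩ hzu
    exact hxt.2 z ⟨hz0, hzxt⟩
  set φ' : ℝ → ℝ := fun u => h (ε' * u) (ε' * u) (ε' * u) with hφ'def
  have hφ'mono : MonotoneOn φ' (Icc 0 1) := by
    intro a ha b hb hab
    exact ft_mono h_maps h_zero h_mono1 h_mono2 h_mono3 (mul_nonneg hε'pos.le ha.1)
      (mul_le_mul_of_nonneg_left hab hε'pos.le) (by nlinarith [hb.2])
  have hφ'range : ∀ z ∈ Icc (0:ℝ) 1, φ' z ∈ Icc (0:ℝ) 1 := by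
    intro z hz
    have hmem : ε' * z ∈ Icc (0:ℝ) 1 := ⟨mul_nonneg hε'pos.le hz.1, by nlinarith [hz.2]⟩
    exact h_maps _ hmem _ hmem _ hmem
  have hUeq : ∀ z : ℝ, Ufun f (fun x => x) z ε' = z^2/2 - ∫ u in (0:ℝ)..z, φ' u := by
    intro z
    unfold Ufun Gfun Ffun
    rw [show (∫ u in (0:ℝ)..z, f u ε') = ∫ u in (0:ℝ)..z, φ' u from rfl]
    rw [integral_id]
    ring
  have hUcont : ContinuousOn (fun z => Ufun f (fun x => x) z ε') (Icc 0 1) := by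
    have hfe : (fun z => Ufun f (fun x => x) z ε') =
        fun z => z^2/2 - ∫ u in (0:ℝ)..z, φ' u := funext hUeq
    rw [hfe]
    apply ContinuousOn.sub
    · exact (by continuity : Continuous (fun z : ℝ => z^2/2)).continuousOn
    · exact phi_cont hφ'mono hφ'range
  obtain ⟨z₀, hz₀m, hz₀min⟩ := isCompact_Icc.exists_isMinOn (s := Icc u' 1)
    ⟨1, ⟨hu'le1, le_rfl⟩⟩ (hUcont.mono (Icc_subset_Icc hu'pos.le le_rfl))
  set δ : ℝ := Ufun f (fun x => x) z₀ ε' with hδdef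
  have hδpos : 0 < δ := hU'pos z₀ hz₀m
  have hδle : ∀ z ∈ Icc u' 1, δ ≤ Ufun f (fun x => x) z ε' :=
    fun z hz => isMinOn_iff.mp hz₀min z hz
  refine ⟨max 1 (Nat.ceil (1/δ)), ?_⟩
  intro m hm L x hx01 hsupp hfix
  have hm1 : 1 ≤ m := le_trans (le_max_left _ _) hm
  have hNδ : 1/((m:ℝ)+1) < δ := by
    have h1 : (1/δ : ℝ) ≤ (Nat.ceil (1/δ) : ℝ) := Nat.le_ceil _
    have h2 : ((Nat.ceil (1/δ)):ℝ) ≤ (m:ℝ) := by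
      exact_mod_cast le_trans (le_max_right _ _) hm
    have h3 : 1/δ < (m:ℝ)+1 := by linarith
    rw [div_lt_iff₀ (by positivity : (0:ℝ) < (m:ℝ)+1)]
    rw [div_lt_iff₀ hδpos] at h3
    nlinarith
  have hEq0 := hfix (fun s => (ε / ((m:ℝ) + 1)) * ∑ j ∈ Finset.range (m + 1),
    x (s - (j:ℤ))) (fun s => rfl)
  rcases eq_or_lt_of_le hε.1 with hε0 | hεpos
  · intro t
    by_cases ht : t ∈ Icc (1:ℤ) (L:ℤ)
    · rw [hEq0 t ht]
      have hq0 : ∀ s : ℤ, (ε / ((m:ℝ) + 1)) * ∑ j ∈ Finset.range (m + 1),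
          x (s - (j:ℤ)) = 0 := by
        intro s
        rw [← hε0]
        simp
      simp [hq0, h_zero]
    · exact hsupp t ht
  · intro t
    by_contra hxt
    obtain ⟨M, hMpos, hM1, hC2, hpot⟩ := fixed_point_bound (fun q => h q q q) h_zero
      (fun a b ha hab hb => ft_mono h_maps h_zero h_mono1 h_mono2 h_mono3 ha hab hb)
      (fun a b ha hab hb => ft_strict h_maps h_zero h_mono1 h_mono2 h_mono3 ha hab hb)
      (fun q hq0 hq1 => ⟨(h_maps q ⟨hq0, hq1⟩ q ⟨hq0, hq1⟩ q ⟨hq0, hq1⟩).1,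
        (h_maps q ⟨hq0, hq1⟩ q ⟨hq0, hq1⟩ q ⟨hq0, hq1⟩).2⟩)
      ε hεpos hε.2 m hm1 L x hx01 hsupp hEq0 t hxt
    have hC2' : M < h (ε*M) (ε*M) (ε*M) := hC2
    have hMu' : u' < M := by
      by_contra hle
      push_neg at hle
      set z := (ε/ε' * M + M)/2 with hzdef
      have h1 : ε/ε' * M < M := by
        have hr : ε/ε' < 1 := (div_lt_one hε'pos).mpr hεlt
        nlinarith
      have hz0 : 0 < z := by
        have hge : 0 ≤ ε/ε' * M := by positivity
        rw [hzdef]; linarith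
      have hzM : z < M := by rw [hzdef]; linarith
      have h4 : h (ε' * z) (ε' * z) (ε' * z) < z := hC3 z hz0 (lt_of_lt_of_le hzM hle)
      have h5 : ε * M ≤ ε' * z := by
        have he : ε * M = ε' * (ε/ε' * M) := by field_simp
        rw [he]
        apply mul_le_mul_of_nonneg_left _ hε'pos.le
        rw [hzdef]; linarith
      have hz1 : ε' * z ≤ 1 := by nlinarith
      have h6 : h (ε*M) (ε*M) (ε*M) ≤ h (ε'*z) (ε'*z) (ε'*z) :=
        ft_mono h_maps h_zero h_mono1 h_mono2 h_mono3 (by positivity) h5 hz1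
      linarith
    have hδM : δ ≤ Ufun f (fun x => x) M ε' := hδle M ⟨hMu'.le, hM1⟩
    have hφmono2 : MonotoneOn (fun u => h (ε*u) (ε*u) (ε*u)) (Icc 0 1) := by
      intro a ha b hb hab
      exact ft_mono h_maps h_zero h_mono1 h_mono2 h_mono3 (mul_nonneg hεpos.le ha.1)
        (mul_le_mul_of_nonneg_left hab hεpos.le) (by nlinarith [hb.2])
    have hUM : Ufun f (fun x => x) M ε' ≤
        M^2/2 - ∫ zz in (0:ℝ)..M, h (ε*zz) (ε*zz) (ε*zz) := by
      rw [hUeq M]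
      have hint1 : IntervalIntegrable (fun u => h (ε*u) (ε*u) (ε*u))
          MeasureTheory.volume 0 M := phi_intg hφmono2 le_rfl hMpos.le hM1
      have hint2 : IntervalIntegrable φ' MeasureTheory.volume 0 M :=
        phi_intg hφ'mono le_rfl hMpos.le hM1
      have hcomp := intervalIntegral.integral_mono_on hMpos.le hint1 hint2
        (fun u hu => ft_mono h_maps h_zero h_mono1 h_mono2 h_mono3
          (mul_nonneg hεpos.le hu.1)
          (mul_le_mul_of_nonneg_right hεlt.le hu.1)
          (by nlinarith [hu.2, hM1, hu.1]))
      linarith [hcomp]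
    have hpot' : M^2/2 - (∫ zz in (0:ℝ)..M, h (ε*zz) (ε*zz) (ε*zz)) ≤ 1/((m:ℝ)+1) := hpot
    linarith
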